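/- Let W ∈ ℝ^{n×q} have full row rank (rank(W) = n < q), T ∈ ℝ^{n×m} have full column rank (rank(T) = m < n), and y ∈ ℝⁿ. Fix i ∈ {1,…,n}, assume T_{∼i} has full column rank, and let λ̂^{(∼i)} := P_{(W_{∼i})ᵀ} P⊥_{(W_{∼i})† T_{∼i}} (W_{∼i})† y_{∼i} and τ̂^{(∼i)} := ((W_{∼i})† T_{∼i})† (W_{∼i})† y_{∼i} be the partially regularized leave-i-out OLS estimates. Define the leave-i-out prediction residual ε̃_i := y_i − (w_iᵀ λ̂^{(∼i)} + t_iᵀ τ̂^{(∼i)}), where w_iᵀ and t_iᵀ are the i-th rows of W and T. Define W̃_i := P⊥_{W†e_i} W† with P_{W†e_i} = (W† e_i e_iᵀ W†ᵀ)/(e_iᵀ G_W e_i), and H_i := T (W̃_i T)† W̃_i. Then ε̃_i = e_iᵀ [diag(G_W)]⁻¹ G_W (I_n − H_i) y, where diag(G_W) is the diagonal matrix of the diagonal entries of G_W (which is invertible since G_W is positive definite). -/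

import Mathlib

open Matrix BigOperators

noncomputable section

/-- `B` is the Moore–Penrose pseudoinverse of `A`. -/
def IsMPInv {m n : Type*} [Fintype m] [Fintype n]
    (A : Matrix m n ℝ) (B : Matrix n m ℝ) : Prop :=
  A * B * A = A ∧ B * A * B = B ∧ (A * B)ᵀ = A * B ∧ (B * A)ᵀ = B * A

/-- Remove the `i`-th row of a matrix. -/
def dropRow {n q : ℕ} (A : Matrix (Fin (n + 1)) (Fin q) ℝ) (i : Fin (n + 1)) :
    Matrix (Fin n) (Fin q) ℝ :=
  Matrix.of fun j k => A (i.succAbove j) k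

/-- Remove the `i`-th entry of a vector. -/
def dropEntry {n : ℕ} (v : Fin (n + 1) → ℝ) (i : Fin (n + 1)) : Fin n → ℝ :=
  fun j => v (i.succAbove j)

lemma mul_vecMulVec' {k m n : Type*} [Fintype m] (A : Matrix k m ℝ) (v : m → ℝ) (w : n → ℝ) :
    A * vecMulVec v w = vecMulVec (A *ᵥ v) w := by
  ext j l
  simp only [mul_apply, vecMulVec_apply, mulVec, dotProduct, Finset.sum_mul]
  exact Finset.sum_congr rfl fun k _ => by ring

lemma vecMulVec_mul' {k m n : Type*} [Fintype m] (v : k → ℝ) (w : m → ℝ) (A : Matrix m n ℝ) :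
    vecMulVec v w * A = vecMulVec v (w ᵥ* A) := by
  ext j l
  simp only [mul_apply, vecMulVec_apply, vecMul, dotProduct, Finset.mul_sum]
  exact Finset.sum_congr rfl fun k _ => by ring

lemma vecMulVec_transpose' {k n : Type*} (v : k → ℝ) (w : n → ℝ) :
    (vecMulVec v w)ᵀ = vecMulVec w v := by
  ext j l; simp [vecMulVec_apply, mul_comm]

/-- Uniqueness of the Moore–Penrose pseudoinverse. -/
lemma IsMPInv.unique' {m n : Type*} [Fintype m] [Fintype n]
    {A : Matrix m n ℝ} {B C : Matrix n m ℝ}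
    (hB : IsMPInv A B) (hC : IsMPInv A C) :
    B = C := by
  obtain ⟨hB1, hB2, hB3, hB4⟩ := hB
  obtain ⟨hC1, hC2, hC3, hC4⟩ := hC
  have e1 : A * B = A * C := by
    calc A * B = (A * B)ᵀ := hB3.symm
    _ = ((A * C * A) * B)ᵀ := by rw [hC1]
    _ = Bᵀ * (Aᵀ * (Cᵀ * Aᵀ)) := by simp only [transpose_mul, Matrix.mul_assoc]
    _ = (Bᵀ * Aᵀ) * (Cᵀ * Aᵀ) := by simp only [Matrix.mul_assoc]
    _ = (A * B)ᵀ * (A * C)ᵀ := by simp only [transpose_mul]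
    _ = (A * B) * (A * C) := by rw [hB3, hC3]
    _ = (A * B * A) * C := by simp only [Matrix.mul_assoc]
    _ = A * C := by rw [hB1]
  have e2 : B * A = C * A := by
    calc B * A = (B * A)ᵀ := hB4.symm
    _ = (B * (A * C * A))ᵀ := by rw [hC1]
    _ = Aᵀ * (Cᵀ * (Aᵀ * Bᵀ)) := by simp only [transpose_mul, Matrix.mul_assoc]
    _ = (Aᵀ * Cᵀ) * (Aᵀ * Bᵀ) := by simp only [Matrix.mul_assoc]
    _ = (C * A)ᵀ * (B * A)ᵀ := by simp only [transpose_mul]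
    _ = (C * A) * (B * A) := by rw [hB4, hC4]
    _ = C * (A * B * A) := by simp only [Matrix.mul_assoc]
    _ = C * A := by rw [hB1]
  calc B = B * A * B := hB2.symm
  _ = B * (A * C) := by rw [← e1, Matrix.mul_assoc]
  _ = (C * A) * C := by rw [← Matrix.mul_assoc, e2]
  _ = C := hC2

/-- For a Moore–Penrose inverse `B` of `A`, `B * (A * Aᵀ) = Aᵀ`. -/
lemma mp_mul_self_transpose {m n : Type*} [Fintype m] [Fintype n]
    {A : Matrix m n ℝ} {B : Matrix n m ℝ} (h : IsMPInv A B) :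
    B * (A * Aᵀ) = Aᵀ := by
  calc B * (A * Aᵀ) = (B * A) * Aᵀ := by rw [Matrix.mul_assoc]
  _ = (B * A)ᵀ * Aᵀ := by rw [h.2.2.2]
  _ = (A * (B * A))ᵀ := (transpose_mul A (B * A)).symm
  _ = (A * B * A)ᵀ := by rw [Matrix.mul_assoc]
  _ = Aᵀ := by rw [h.1]

def dropMat {n : ℕ} (i : Fin (n + 1)) : Matrix (Fin n) (Fin (n + 1)) ℝ :=
  Matrix.of fun j k => if k = i.succAbove j then 1 else 0

lemma dropMat_mul {n q : ℕ} (i : Fin (n + 1)) (A : Matrix (Fin (n + 1)) (Fin q) ℝ) :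
    dropMat i * A = dropRow A i := by
  ext j l
  simp [dropMat, dropRow, mul_apply, ite_mul]

lemma dropMat_mulVec {n : ℕ} (i : Fin (n + 1)) (v : Fin (n + 1) → ℝ) :
    dropMat i *ᵥ v = dropEntry v i := by
  ext j
  simp [dropMat, dropEntry, mulVec, dotProduct, ite_mul]

lemma dropMat_mul_transpose {n : ℕ} (i : Fin (n + 1)) :
    dropMat i * (dropMat i)ᵀ = 1 := by
  ext j l
  simp [dropMat, mul_apply, transpose_apply, one_apply, ite_mul,
    Fin.succAbove_right_inj, eq_comm]

lemma dropMat_mulVec_single {n : ℕ} (i : Fin (n + 1)) :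
    dropMat i *ᵥ Pi.single i 1 = 0 := by
  rw [dropMat_mulVec]
  ext j
  simp [dropEntry, Pi.single_apply, (Fin.succAbove_ne i j)]

lemma transpose_dropMat_mul {n p : ℕ} (i : Fin (n + 1))
    (N : Matrix (Fin (n + 1)) (Fin p) ℝ) (h : ∀ b, N i b = 0) :
    (dropMat i)ᵀ * (dropMat i * N) = N := by
  rw [dropMat_mul]
  ext a b
  simp only [mul_apply, transpose_apply, dropMat, dropRow, of_apply, ite_mul, one_mul, zero_mul]
  by_cases ha : a = i
  · subst ha
    rw [Finset.sum_eq_zero, h]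
    intro j _
    exact if_neg (Ne.symm (Fin.succAbove_ne _ j))
  · obtain ⟨j₀, hj₀⟩ := Fin.exists_succAbove_eq ha
    rw [Finset.sum_eq_single j₀]
    · rw [hj₀, if_pos rfl]
    · intro j _ hj
      refine if_neg fun hc => hj ?_
      exact Fin.succAbove_right_injective (hc.symm.trans hj₀.symm) |>.symm ▸ rfl
    · intro hj; exact absurd (Finset.mem_univ j₀) hj

lemma mul_transpose_dropMat {n p : ℕ} (i : Fin (n + 1))
    (M : Matrix (Fin p) (Fin (n + 1)) ℝ) (h : ∀ a, M a i = 0) :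
    (M * (dropMat i)ᵀ) * dropMat i = M := by
  have := transpose_dropMat_mul i Mᵀ (fun b => h b)
  have h2 := congrArg Matrix.transpose this
  simpa [transpose_mul, Matrix.mul_assoc] using h2

lemma posDef_self_mul_transpose' {p q : ℕ} (W : Matrix (Fin p) (Fin q) ℝ)
    (hW : W.rank = p) : (W * Wᵀ).PosDef := by
  have hker : LinearMap.ker (Wᵀ.mulVecLin) = ⊥ := by
    have hrank : Wᵀ.rank = p := by rw [Matrix.rank_transpose]; exact hW
    have h := LinearMap.finrank_range_add_finrank_ker (Wᵀ.mulVecLin)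
    rw [show Module.finrank ℝ (Fin p → ℝ) = p by simp, ← Matrix.rank] at h
    rw [hrank] at h
    have h0 : Module.finrank ℝ (LinearMap.ker Wᵀ.mulVecLin) = 0 := by omega
    exact Submodule.finrank_eq_zero.mp h0
  have hinj : ∀ x : Fin p → ℝ, x ≠ 0 → Wᵀ *ᵥ x ≠ 0 := by
    intro x hx hc
    exact hx (LinearMap.ker_eq_bot.mp hker (show Wᵀ.mulVecLin x = Wᵀ.mulVecLin 0 by
      rw [map_zero, Matrix.mulVecLin_apply]; exact hc))
  rw [Matrix.posDef_iff_dotProduct_mulVec]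
  constructor
  · simpa using (Matrix.isHermitian_mul_conjTranspose_self W)
  · intro x hx
    have : star x ⬝ᵥ (W * Wᵀ) *ᵥ x = (Wᵀ *ᵥ x) ⬝ᵥ (Wᵀ *ᵥ x) := by
      rw [show star x = x from rfl, ← Matrix.mulVec_mulVec, Matrix.dotProduct_mulVec,
        Matrix.mulVec_transpose]
    rw [this]
    have h1 : 0 ≤ (Wᵀ *ᵥ x) ⬝ᵥ (Wᵀ *ᵥ x) := by
      simpa using dotProduct_self_star_nonneg (Wᵀ *ᵥ x)
    rcases h1.lt_or_eq with h | h
    · exact h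
    · exact absurd (dotProduct_self_eq_zero.mp h.symm) (hinj x hx)

lemma posDef_diag_pos {p : ℕ} {G : Matrix (Fin p) (Fin p) ℝ} (hG : G.PosDef)
    (j : Fin p) : 0 < G j j := by
  have h := (Matrix.posDef_iff_dotProduct_mulVec.mp hG).2 (x := Pi.single j 1) (fun h => by simpa using congrFun h j)
  simpa [dotProduct, mulVec, Pi.single_apply, Finset.sum_ite_eq] using h

theorem loo_prediction_residual
    {n q m : ℕ}
    (W : Matrix (Fin (n + 1)) (Fin q) ℝ) (T : Matrix (Fin (n + 1)) (Fin m) ℝ)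
    (y : Fin (n + 1) → ℝ)
    (hW : W.rank = n + 1) (hnq : n + 1 < q)
    (hT : T.rank = m) (hmn : m < n + 1)
    (i : Fin (n + 1))
    (hTd : (dropRow T i).rank = m)
    (Wp : Matrix (Fin q) (Fin (n + 1)) ℝ) (hWp : IsMPInv W Wp)
    (GW : Matrix (Fin (n + 1)) (Fin (n + 1)) ℝ) (hGW : IsMPInv (W * Wᵀ) GW)
    (Wdp : Matrix (Fin q) (Fin n) ℝ) (hWdp : IsMPInv (dropRow W i) Wdp)
    (L : Matrix (Fin m) (Fin q) ℝ) (hL : IsMPInv (Wdp * dropRow T i) L)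
    -- λ̂^{(∼i)} = P_{(W_{∼i})ᵀ} P⊥_{(W_{∼i})† T_{∼i}} (W_{∼i})† y_{∼i}
    (lam : Fin q → ℝ)
    (hlam : lam = ((dropRow W i)ᵀ * Wdpᵀ) *ᵥ
      (((1 : Matrix (Fin q) (Fin q) ℝ) - (Wdp * dropRow T i) * L) *ᵥ
        (Wdp *ᵥ dropEntry y i)))
    -- τ̂^{(∼i)} = ((W_{∼i})† T_{∼i})† (W_{∼i})† y_{∼i}
    (tau : Fin m → ℝ) (htau : tau = L *ᵥ (Wdp *ᵥ dropEntry y i))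
    -- leave-`i`-out prediction residual ε̃_i = y_i − (w_iᵀ λ̂^{(∼i)} + t_iᵀ τ̂^{(∼i)})
    (eps : ℝ) (heps : eps = y i - ((W i) ⬝ᵥ lam + (T i) ⬝ᵥ tau))
    -- `W̃_i = P⊥_{W†e_i} W†` with `P_{W†e_i} = (W† e_i e_iᵀ W†ᵀ)/(e_iᵀ G_W e_i)`
    (Wt : Matrix (Fin q) (Fin (n + 1)) ℝ)
    (hWt : Wt = ((1 : Matrix (Fin q) (Fin q) ℝ)
      - (GW i i)⁻¹ • vecMulVec (Wpᵀ i) (Wpᵀ i)) * Wp)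
    (K : Matrix (Fin m) (Fin q) ℝ) (hK : IsMPInv (Wt * T) K)
    -- `H_i = T (W̃_i T)† W̃_i` and `D = diag(G_W)`
    (H : Matrix (Fin (n + 1)) (Fin (n + 1)) ℝ) (hH : H = T * K * Wt)
    (D : Matrix (Fin (n + 1)) (Fin (n + 1)) ℝ)
    (hD : D = Matrix.diagonal fun j => GW j j) :
    eps = ((D⁻¹ * GW * ((1 : Matrix (Fin (n + 1)) (Fin (n + 1)) ℝ) - H)) *ᵥ y) i := by
  -- Invertibility facts
  have hMpd : (W * Wᵀ).PosDef := posDef_self_mul_transpose' W hW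
  have hMdet : IsUnit (W * Wᵀ).det := (Matrix.isUnit_iff_isUnit_det _).mp hMpd.isUnit
  have hMGW : (W * Wᵀ) * GW = 1 := by
    have h1 := hGW.1
    have h2 : ((W * Wᵀ) * GW * (W * Wᵀ)) * (W * Wᵀ)⁻¹ = (W * Wᵀ) * (W * Wᵀ)⁻¹ := by rw [h1]
    rwa [Matrix.mul_assoc ((W * Wᵀ) * GW), Matrix.mul_nonsing_inv _ hMdet, Matrix.mul_one] at h2
  have hGWinv : GW = (W * Wᵀ)⁻¹ := (Matrix.inv_eq_right_inv hMGW).symm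
  have hGWpd : GW.PosDef := by rw [hGWinv]; exact hMpd.inv
  have hdpos : ∀ j, 0 < GW j j := fun j => posDef_diag_pos hGWpd j
  have hc : GW i i ≠ 0 := (hdpos i).ne'
  have hMsym : (W * Wᵀ)ᵀ = W * Wᵀ := by rw [transpose_mul, transpose_transpose]
  have hGWsym : GWᵀ = GW := by rw [hGWinv, Matrix.transpose_nonsing_inv, hMsym]
  have hgsym : ∀ j k, GW j k = GW k j := fun j k => (congrFun (congrFun hGWsym j) k).symm
  have hWpeq : Wp = Wᵀ * GW := by
    have h3 : Wp * (W * Wᵀ) = Wᵀ := mp_mul_self_transpose hWp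
    calc Wp = Wp * ((W * Wᵀ) * GW) := by rw [hMGW, Matrix.mul_one]
    _ = (Wp * (W * Wᵀ)) * GW := by simp only [Matrix.mul_assoc]
    _ = Wᵀ * GW := by rw [h3]
  -- The vector g (column i of GW) and the matrix N
  set g : Fin (n + 1) → ℝ := fun j => GW j i with hgdef
  set N : Matrix (Fin (n + 1)) (Fin (n + 1)) ℝ := GW - (GW i i)⁻¹ • vecMulVec g g with hNdef
  have hMg : (W * Wᵀ) *ᵥ g = Pi.single i 1 := by
    funext j
    have h4 : ((W * Wᵀ) *ᵥ g) j = ((W * Wᵀ) * GW) j i := by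
      simp [mulVec, dotProduct, mul_apply, hgdef]
    rw [h4, hMGW]
    simp [one_apply, Pi.single_apply]
  have hMN : (W * Wᵀ) * N = 1 - (GW i i)⁻¹ • vecMulVec (Pi.single i 1) g := by
    rw [hNdef, Matrix.mul_sub, Matrix.mul_smul, mul_vecMulVec', hMg, hMGW]
  have hNrow : ∀ b, N i b = 0 := by
    intro b
    simp only [hNdef, Matrix.sub_apply, Matrix.smul_apply, vecMulVec_apply, smul_eq_mul, hgdef]
    rw [inv_mul_cancel_left₀ hc, hgsym i b, sub_self]
  have hNcol : ∀ a, N a i = 0 := by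
    intro a
    simp only [hNdef, Matrix.sub_apply, Matrix.smul_apply, vecMulVec_apply, smul_eq_mul, hgdef]
    rw [mul_comm (GW a i) (GW i i), inv_mul_cancel_left₀ hc, sub_self]
  -- Wt = Wᵀ * N
  have hWt2 : Wt = Wᵀ * N := by
    have hu : Wpᵀ i = Wᵀ *ᵥ g := by
      funext k
      simp [hWpeq, transpose_apply, mulVec, dotProduct, mul_apply, hgdef]
    have hvp : (Wᵀ *ᵥ g) ᵥ* Wp = g := by
      rw [hWpeq, Matrix.mulVec_transpose, Matrix.vecMul_vecMul, ← Matrix.mul_assoc, hMGW,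
        Matrix.vecMul_one]
    rw [hWt, hu, Matrix.sub_mul, Matrix.one_mul, Matrix.smul_mul, vecMulVec_mul', hvp,
      hWpeq, ← mul_vecMulVec', hNdef, Matrix.mul_sub, Matrix.mul_smul]
  -- the selection matrix E
  set E := dropMat i with hEdef
  have hWd : dropRow W i = E * W := (dropMat_mul i W).symm
  have hTd2 : dropRow T i = E * T := (dropMat_mul i T).symm
  have hNEt_row : ∀ b, (N * Eᵀ) i b = 0 := by
    intro b; simp [mul_apply, hNrow]
  have hMNE : (W * Wᵀ) * (N * Eᵀ) = Eᵀ - (GW i i)⁻¹ • (vecMulVec (Pi.single i 1) g * Eᵀ) := by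
    rw [← Matrix.mul_assoc, hMN, Matrix.sub_mul, Matrix.one_mul, Matrix.smul_mul]
  have hEvv : E * vecMulVec (Pi.single i 1) g = 0 := by
    rw [hEdef, mul_vecMulVec', dropMat_mulVec_single]
    ext a b; simp [vecMulVec_apply]
  have hM'G' : ((E * W) * (E * W)ᵀ) * (E * N * Eᵀ) = 1 := by
    calc ((E * W) * (E * W)ᵀ) * (E * N * Eᵀ)
        = E * ((W * Wᵀ) * (Eᵀ * (E * (N * Eᵀ)))) := by
          simp only [transpose_mul, Matrix.mul_assoc]
    _ = E * ((W * Wᵀ) * (N * Eᵀ)) := by rw [hEdef, transpose_dropMat_mul i (N * Eᵀ) hNEt_row]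
    _ = E * Eᵀ - (GW i i)⁻¹ • (E * vecMulVec (Pi.single i 1) g * Eᵀ) := by
        rw [hMNE, Matrix.mul_sub, Matrix.mul_smul, ← Matrix.mul_assoc]
    _ = 1 := by rw [hEvv, hEdef, dropMat_mul_transpose]; simp
  have hWdp3 : Wdp * ((E * W) * (E * W)ᵀ) = (E * W)ᵀ := by
    have h5 := mp_mul_self_transpose hWdp
    rwa [hWd] at h5
  have hWdp2 : Wdp = (E * W)ᵀ * (E * N * Eᵀ) := by
    calc Wdp = Wdp * (((E * W) * (E * W)ᵀ) * (E * N * Eᵀ)) := by rw [hM'G', Matrix.mul_one]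
    _ = (Wdp * ((E * W) * (E * W)ᵀ)) * (E * N * Eᵀ) := by simp only [Matrix.mul_assoc]
    _ = (E * W)ᵀ * (E * N * Eᵀ) := by rw [hWdp3]
  have hWdpE : Wdp * E = Wt := by
    calc Wdp * E = (Wᵀ * (Eᵀ * (E * (N * Eᵀ)))) * E := by rw [hWdp2]; simp only [transpose_mul, Matrix.mul_assoc]
    _ = (Wᵀ * (N * Eᵀ)) * E := by rw [hEdef, transpose_dropMat_mul i (N * Eᵀ) hNEt_row]
    _ = Wᵀ * ((N * Eᵀ) * E) := by rw [Matrix.mul_assoc]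
    _ = Wᵀ * N := by rw [hEdef, mul_transpose_dropMat i N hNcol]
    _ = Wt := hWt2.symm
  have hQ : Wt * T = Wdp * dropRow T i := by
    rw [← hWdpE, hTd2, Matrix.mul_assoc]
  have hKL : K = L := by
    rw [hQ] at hK
    exact IsMPInv.unique' hK hL
  -- final computation
  have hv : Wdp *ᵥ dropEntry y i = Wt *ᵥ y := by
    rw [← dropMat_mulVec i y, ← hEdef, Matrix.mulVec_mulVec, hWdpE]
  set R : Matrix (Fin (n + 1)) (Fin (n + 1)) ℝ := T * (L * Wt) with hRdef
  have hP : (dropRow W i)ᵀ * Wdpᵀ = Wdp * dropRow W i := by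
    rw [← transpose_mul, hWdp.2.2.2]
  have hPWt : (Wdp * dropRow W i) * Wt = Wt := by
    rw [← hWdpE, ← Matrix.mul_assoc, hWdp.2.1]
  have hPQ : (Wdp * dropRow W i) * (Wdp * dropRow T i) = Wdp * dropRow T i := by
    rw [← Matrix.mul_assoc, hWdp.2.1]
  have key1 : ((dropRow W i)ᵀ * Wdpᵀ) * ((1 - (Wdp * dropRow T i) * L) * Wt)
      = Wt - (Wdp * dropRow T i) * (L * Wt) := by
    rw [hP, Matrix.sub_mul, Matrix.one_mul, Matrix.mul_sub, hPWt]
    congr 1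
    rw [Matrix.mul_assoc (Wdp * dropRow T i) L Wt, ← Matrix.mul_assoc (Wdp * dropRow W i), hPQ]
  have key3 : W * (((dropRow W i)ᵀ * Wdpᵀ) * ((1 - (Wdp * dropRow T i) * L) * Wt))
      = W * Wt - (W * Wt) * R := by
    rw [key1, Matrix.mul_sub, ← hQ, hRdef]
    congr 1
    simp only [Matrix.mul_assoc]
  have hlam' : W *ᵥ lam = (W * Wt - (W * Wt) * R) *ᵥ y := by
    rw [hlam, hv]
    simp only [Matrix.mulVec_mulVec]
    rw [← key3]
  have htau' : T *ᵥ tau = R *ᵥ y := by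
    rw [htau, hv]
    simp only [Matrix.mulVec_mulVec]
    rw [hRdef]
  have heps2 : eps = ((((1 : Matrix (Fin (n + 1)) (Fin (n + 1)) ℝ) - W * Wt) * (1 - R)) *ᵥ y) i := by
    rw [heps]
    have h1 : (W i) ⬝ᵥ lam = (W *ᵥ lam) i := rfl
    have h2 : (T i) ⬝ᵥ tau = (T *ᵥ tau) i := rfl
    have key4 : (1 - W * Wt) * (1 - R) = 1 - (W * Wt - (W * Wt) * R) - R := by noncomm_ring
    rw [h1, h2, hlam', htau', key4]
    simp only [Matrix.sub_mulVec, Matrix.one_mulVec, Pi.sub_apply]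
    ring
  have hWWt : (1 : Matrix (Fin (n + 1)) (Fin (n + 1)) ℝ) - W * Wt
      = (GW i i)⁻¹ • vecMulVec (Pi.single i 1) g := by
    rw [hWt2, ← Matrix.mul_assoc, hMN]
    abel
  have hDinv : D⁻¹ = diagonal (fun j => (GW j j)⁻¹) := by
    apply Matrix.inv_eq_right_inv
    rw [hD, Matrix.diagonal_mul_diagonal]
    have h6 : (fun j => GW j j * (GW j j)⁻¹) = fun _ => (1 : ℝ) :=
      funext fun j => mul_inv_cancel₀ (hdpos j).ne'
    rw [h6, Matrix.diagonal_one]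
  have hrow : ∀ k, ((1 : Matrix (Fin (n + 1)) (Fin (n + 1)) ℝ) - W * Wt) i k = (D⁻¹ * GW) i k := by
    intro k
    rw [hWWt, hDinv]
    simp only [Matrix.smul_apply, vecMulVec_apply, Pi.single_apply, if_pos rfl, if_true,
      smul_eq_mul, one_mul, Matrix.diagonal_mul, hgdef]
    rw [hgsym k i]
  have hfin : ((((1 : Matrix (Fin (n + 1)) (Fin (n + 1)) ℝ) - W * Wt) * (1 - R)) *ᵥ y) i
      = ((D⁻¹ * GW * (1 - R)) *ᵥ y) i := by
    simp only [mulVec, dotProduct, mul_apply]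
    refine Finset.sum_congr rfl fun j _ => ?_
    congr 1
    refine Finset.sum_congr rfl fun k _ => ?_
    rw [hrow k, Matrix.mul_apply]
  rw [heps2, hfin, hH, hKL, hRdef, ← Matrix.mul_assoc T L Wt]
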